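/- Let n ≥ 1, let 𝓕 be a nonempty set of functions ℝ → ℝ taking values in [0,1], and define the goodness-of-fit statistic T_K(x) = inf_{G ∈ 𝓕} [ (sup_{t∈ℝ} (F̂_x(t) − G(t))) + (sup_{s∈ℝ} (G(s) − F̂_x(s))) ] for x ∈ ℝⁿ. Then for any x, x' ∈ ℝⁿ differing in at most one coordinate, |T_K(x) − T_K(x')| ≤ 1/n; i.e., the sensitivity of the minimum Kuiper goodness-of-fit statistic is at most 1/n. -/

import Mathlib

open Filter

/-- Empirical cdf of a sample `x : Fin n → ℝ`. -/
noncomputable def ecdf {n : ℕ} (x : Fin n → ℝ) (t : ℝ) : ℝ :=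
  (Finset.univ.filter (fun i => x i ≤ t)).card / n

/-- Minimum Kuiper goodness-of-fit statistic over a family `𝓕`. -/
noncomputable def gofKuiper {n : ℕ} (𝓕 : Set (ℝ → ℝ)) (x : Fin n → ℝ) : ℝ :=
  ⨅ G : 𝓕, ((⨆ t : ℝ, (ecdf x t - (G : ℝ → ℝ) t)) +
            (⨆ s : ℝ, ((G : ℝ → ℝ) s - ecdf x s)))

lemma ecdf_nonneg {n : ℕ} (x : Fin n → ℝ) (t : ℝ) : 0 ≤ ecdf x t := by
  unfold ecdf; positivity

lemma ecdf_le_one {n : ℕ} (hn : 1 ≤ n) (x : Fin n → ℝ) (t : ℝ) : ecdf x t ≤ 1 := by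
  unfold ecdf
  rw [div_le_one (by exact_mod_cast Nat.lt_of_lt_of_le Nat.zero_lt_one hn)]
  exact_mod_cast (Finset.card_filter_le _ _).trans (by simp)

lemma ciSup_le_ciSup_add {f g : ℝ → ℝ} {c : ℝ} (h : ∀ t, f t ≤ g t + c)
    (bdd : BddAbove (Set.range g)) : (⨆ t, f t) ≤ (⨆ t, g t) + c :=
  ciSup_le fun t => (h t).trans (add_le_add_left (le_ciSup bdd t) c)

lemma gofKuiper_le {n : ℕ} (hn : 1 ≤ n) (𝓕 : Set (ℝ → ℝ))
    (h𝓕ne : 𝓕.Nonempty) (h𝓕 : ∀ G ∈ 𝓕, ∀ t, G t ∈ Set.Icc (0 : ℝ) 1)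
    (x x' : Fin n → ℝ)
    (h1 : ∀ t, ecdf x' t ≤ ecdf x t) (h2 : ∀ t, ecdf x t ≤ ecdf x' t + 1 / n) :
    gofKuiper 𝓕 x ≤ gofKuiper 𝓕 x' + 1 / n ∧
      gofKuiper 𝓕 x' ≤ gofKuiper 𝓕 x + 1 / n := by
  haveI : Nonempty ↥𝓕 := h𝓕ne.to_subtype
  -- boundedness facts
  have bddA : ∀ y : Fin n → ℝ, ∀ G : 𝓕, BddAbove (Set.range fun t => ecdf y t - (G : ℝ → ℝ) t) := by
    intro y G
    refine ⟨1, ?_⟩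
    rintro r ⟨t, rfl⟩
    have := (h𝓕 G G.2 t).1
    have := ecdf_le_one hn y t
    dsimp; linarith
  have bddB : ∀ y : Fin n → ℝ, ∀ G : 𝓕, BddAbove (Set.range fun s => (G : ℝ → ℝ) s - ecdf y s) := by
    intro y G
    refine ⟨1, ?_⟩
    rintro r ⟨s, rfl⟩
    have := (h𝓕 G G.2 s).2
    have := ecdf_nonneg y s
    dsimp; linarith
  -- each summand is ≥ 0, hence infima are over sets bdd below
  have bddI : ∀ y : Fin n → ℝ, BddBelow (Set.range fun G : 𝓕 =>
      (⨆ t : ℝ, (ecdf y t - (G : ℝ → ℝ) t)) + (⨆ s : ℝ, ((G : ℝ → ℝ) s - ecdf y s))) := by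
    intro y
    refine ⟨0, ?_⟩
    rintro r ⟨G, rfl⟩
    have hA := le_ciSup (bddA y G) (0 : ℝ)
    have hB := le_ciSup (bddB y G) (0 : ℝ)
    dsimp at hA hB ⊢
    linarith
  have step : ∀ G : 𝓕,
      ((⨆ t : ℝ, (ecdf x t - (G : ℝ → ℝ) t)) + (⨆ s : ℝ, ((G : ℝ → ℝ) s - ecdf x s)))
        ≤ ((⨆ t : ℝ, (ecdf x' t - (G : ℝ → ℝ) t)) + (⨆ s : ℝ, ((G : ℝ → ℝ) s - ecdf x' s))) + 1 / n := by
    intro G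
    have hA : (⨆ t : ℝ, (ecdf x t - (G : ℝ → ℝ) t))
        ≤ (⨆ t : ℝ, (ecdf x' t - (G : ℝ → ℝ) t)) + 1 / n :=
      ciSup_le_ciSup_add (fun t => by have := h2 t; linarith) (bddA x' G)
    have hB : (⨆ s : ℝ, ((G : ℝ → ℝ) s - ecdf x s))
        ≤ (⨆ s : ℝ, ((G : ℝ → ℝ) s - ecdf x' s)) + 0 :=
      ciSup_le_ciSup_add (fun s => by have := h1 s; linarith) (bddB x' G)
    linarith
  have step' : ∀ G : 𝓕,
      ((⨆ t : ℝ, (ecdf x' t - (G : ℝ → ℝ) t)) + (⨆ s : ℝ, ((G : ℝ → ℝ) s - ecdf x' s)))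
        ≤ ((⨆ t : ℝ, (ecdf x t - (G : ℝ → ℝ) t)) + (⨆ s : ℝ, ((G : ℝ → ℝ) s - ecdf x s))) + 1 / n := by
    intro G
    have hA : (⨆ t : ℝ, (ecdf x' t - (G : ℝ → ℝ) t))
        ≤ (⨆ t : ℝ, (ecdf x t - (G : ℝ → ℝ) t)) + 0 :=
      ciSup_le_ciSup_add (fun t => by have := h1 t; linarith) (bddA x G)
    have hB : (⨆ s : ℝ, ((G : ℝ → ℝ) s - ecdf x' s))
        ≤ (⨆ s : ℝ, ((G : ℝ → ℝ) s - ecdf x s)) + 1 / n :=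
      ciSup_le_ciSup_add (fun s => by have := h2 s; linarith) (bddB x G)
    linarith
  constructor
  · have key : gofKuiper 𝓕 x - 1 / n ≤ gofKuiper 𝓕 x' := by
      refine le_ciInf fun G => ?_
      have := (ciInf_le (bddI x) G).trans (step G)
      unfold gofKuiper
      linarith
    linarith
  · have key : gofKuiper 𝓕 x' - 1 / n ≤ gofKuiper 𝓕 x := by
      refine le_ciInf fun G => ?_
      have := (ciInf_le (bddI x') G).trans (step' G)
      unfold gofKuiper
      linarith
    linarith

lemma ecdf_pair {n : ℕ} (hn : 1 ≤ n) {x x' : Fin n → ℝ} {i : Fin n}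
    (hi : ∀ j, j ≠ i → x j = x' j) (hxi : x i ≤ x' i) :
    (∀ t, ecdf x' t ≤ ecdf x t) ∧ (∀ t, ecdf x t ≤ ecdf x' t + 1 / n) := by
  have hnpos : (0 : ℝ) < n := by exact_mod_cast Nat.lt_of_lt_of_le Nat.zero_lt_one hn
  constructor
  · intro t
    unfold ecdf
    rw [div_le_div_iff_of_pos_right hnpos]
    exact_mod_cast Finset.card_le_card fun j hj => by
      simp only [Finset.mem_filter, Finset.mem_univ, true_and] at hj ⊢
      by_cases h : j = i
      · subst h; linarith
      · rw [hi j h]; exact hj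
  · intro t
    unfold ecdf
    have hcard : (Finset.univ.filter (fun j => x j ≤ t)).card
        ≤ (Finset.univ.filter (fun j => x' j ≤ t)).card + 1 := by
      have hsub : Finset.univ.filter (fun j => x j ≤ t)
          ⊆ insert i (Finset.univ.filter (fun j => x' j ≤ t)) := by
        intro j hj
        simp only [Finset.mem_filter, Finset.mem_univ, true_and] at hj
        by_cases h : j = i
        · subst h; exact Finset.mem_insert_self _ _
        · exact Finset.mem_insert_of_mem (by
            simp only [Finset.mem_filter, Finset.mem_univ, true_and]
            rw [← hi j h]; exact hj)
      calc _ ≤ (insert i (Finset.univ.filter (fun j => x' j ≤ t))).card :=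
              Finset.card_le_card hsub
        _ ≤ _ := Finset.card_insert_le _ _
    rw [← add_div, div_le_div_iff_of_pos_right hnpos]
    exact_mod_cast hcard

theorem gofKuiper_sensitivity {n : ℕ} (hn : 1 ≤ n) (𝓕 : Set (ℝ → ℝ))
    (h𝓕ne : 𝓕.Nonempty) (h𝓕 : ∀ G ∈ 𝓕, ∀ t, G t ∈ Set.Icc (0 : ℝ) 1)
    (x x' : Fin n → ℝ) (hadj : hammingDist x x' ≤ 1) :
    |gofKuiper 𝓕 x - gofKuiper 𝓕 x'| ≤ 1 / n := by
  have hnpos : (0 : ℝ) < n := by exact_mod_cast Nat.lt_of_lt_of_le Nat.zero_lt_one hn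
  rcases Finset.card_le_one.mp hadj with h
  by_cases hxx : x = x'
  · subst hxx; simp
  · -- there exists i with x i ≠ x' i, and it's the unique such
    obtain ⟨i, hi⟩ : ∃ i, x i ≠ x' i := by
      by_contra hc
      push_neg at hc
      exact hxx (funext hc)
    have huniq : ∀ j, j ≠ i → x j = x' j := by
      intro j hj
      by_contra hc
      have h1 : j ∈ ({k | x k ≠ x' k} : Finset (Fin n)) := by simp [hc]
      have h2 : i ∈ ({k | x k ≠ x' k} : Finset (Fin n)) := by simp [hi]
      exact hj (h j h1 i h2)
    rcases le_total (x i) (x' i) with hle | hle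
    · obtain ⟨hA, hB⟩ := ecdf_pair hn huniq hle
      obtain ⟨k1, k2⟩ := gofKuiper_le hn 𝓕 h𝓕ne h𝓕 x x' hA hB
      rw [abs_sub_le_iff]
      constructor <;> linarith
    · have huniq' : ∀ j, j ≠ i → x' j = x j := fun j hj => (huniq j hj).symm
      obtain ⟨hA, hB⟩ := ecdf_pair hn huniq' hle
      obtain ⟨k1, k2⟩ := gofKuiper_le hn 𝓕 h𝓕ne h𝓕 x' x hA hB
      rw [abs_sub_le_iff]
      constructor <;> linarith
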